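/- Let {f_i} be a K-frame for a Hilbert space H with bounds A, B, and let T be a bounded linear operator on H whose range is contained in the range of K. Then {f_i} is a T-frame for H: there exists λ > 0 with (A/λ²)‖T* f‖² ≤ Σ_{i=1}^∞ |⟨f, f_i⟩|² ≤ B‖f‖² for all f ∈ H. -/

import Mathlib

open scoped ComplexInnerProductSpace

open Filter Topology

/-- Douglas factorization: if `R(T) ⊆ R(K)` then `T = K ∘ C` for some bounded `C`. -/
lemma douglas_factor
    {H : Type*} [NormedAddCommGroup H] [InnerProductSpace ℂ H] [CompleteSpace H]
    (K T : H →L[ℂ] H) (hrange : Set.range T ⊆ Set.range K) :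
    ∃ C : H →L[ℂ] H, T = K.comp C := by
  set N : Submodule ℂ H := K.ker with hNdef
  have hNclosed : IsClosed (N : Set H) := ContinuousLinearMap.isClosed_ker K
  haveI : CompleteSpace N := hNclosed.completeSpace_coe
  -- uniqueness of elements of Nᗮ with given image under K
  have uniq : ∀ y₁ y₂ : H, y₁ ∈ Nᗮ → y₂ ∈ Nᗮ → K y₁ = K y₂ → y₁ = y₂ := by
    intro y₁ y₂ h₁ h₂ hK
    have hmemN : y₁ - y₂ ∈ N := by
      simp only [hNdef, LinearMap.mem_ker, ContinuousLinearMap.coe_coe, map_sub, hK, sub_self]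
    have hmemO : y₁ - y₂ ∈ Nᗮ := Submodule.sub_mem _ h₁ h₂
    have : ⟪y₁ - y₂, y₁ - y₂⟫ = 0 := (Submodule.mem_orthogonal N _).mp hmemO _ hmemN
    exact sub_eq_zero.mp (inner_self_eq_zero.mp this)
  -- define the lifting function
  have hz : ∀ x : H, ∃ z : H, K z = T x := fun x => hrange ⟨x, rfl⟩
  choose z hzspec using hz
  let s : H → H := fun x => z x - (Submodule.orthogonalProjectionOnto N (z x) : H)
  have hs_mem : ∀ x, s x ∈ Nᗮ := fun x => Submodule.sub_starProjection_mem_orthogonal (K := N) (z x)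
  have hs_K : ∀ x, K (s x) = T x := by
    intro x
    have hproj : (Submodule.orthogonalProjectionOnto N (z x) : H) ∈ N := (Submodule.orthogonalProjectionOnto N (z x)).2
    have : K ((Submodule.orthogonalProjectionOnto N (z x) : H)) = 0 := hproj
    simp only [s, map_sub, this, sub_zero, hzspec]
  have hs_add : ∀ x y, s (x + y) = s x + s y := by
    intro x y
    refine uniq _ _ (hs_mem _) (Submodule.add_mem _ (hs_mem x) (hs_mem y)) ?_
    rw [hs_K, map_add, map_add, hs_K, hs_K]
  have hs_smul : ∀ (c : ℂ) x, s (c • x) = c • s x := by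
    intro c x
    refine uniq _ _ (hs_mem _) (Submodule.smul_mem _ c (hs_mem x)) ?_
    rw [hs_K, map_smul, map_smul, hs_K]
  let Slin : H →ₗ[ℂ] H :=
    { toFun := s, map_add' := hs_add, map_smul' := hs_smul }
  -- closed graph
  have hseq : ∀ (u : ℕ → H) (x y : H), Tendsto u atTop (𝓝 x) →
      Tendsto (Slin ∘ u) atTop (𝓝 y) → y = Slin x := by
    intro u x y hu hsu
    have hKy : Tendsto (fun n => K (s (u n))) atTop (𝓝 (K y)) :=
      (K.continuous.tendsto y).comp hsu
    have hTx : Tendsto (fun n => K (s (u n))) atTop (𝓝 (T x)) := by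
      simp only [hs_K]
      exact (T.continuous.tendsto x).comp hu
    have hKeq : K y = T x := tendsto_nhds_unique hKy hTx
    have hyO : y ∈ Nᗮ := by
      have hcl : IsClosed ((Nᗮ : Submodule ℂ H) : Set H) := Submodule.isClosed_orthogonal N
      exact hcl.mem_of_tendsto hsu (Filter.Eventually.of_forall fun n => hs_mem (u n))
    exact uniq _ _ hyO (hs_mem x) (hKeq.trans (hs_K x).symm)
  let C : H →L[ℂ] H := ContinuousLinearMap.ofSeqClosedGraph hseq
  refine ⟨C, ?_⟩
  ext x
  have : C x = s x := rfl
  simp only [ContinuousLinearMap.comp_apply, this, hs_K]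

/-- If `{f_i}` is a `K`-frame and `T` is a bounded operator with
`R(T) ⊆ R(K)`, then `{f_i}` is a `T`-frame. -/
theorem K_frame_range_inclusion
    {H : Type*} [NormedAddCommGroup H] [InnerProductSpace ℂ H] [CompleteSpace H]
    (K T : H →L[ℂ] H) (f : ℕ → H) (A B : ℝ) (hA : 0 < A) (hAB : A ≤ B)
    (hKframe : ∀ g : H, A * ‖ContinuousLinearMap.adjoint K g‖ ^ 2 ≤
        ∑' i, ‖⟪g, f i⟫‖ ^ 2 ∧ ∑' i, ‖⟪g, f i⟫‖ ^ 2 ≤ B * ‖g‖ ^ 2)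
    (hrange : Set.range T ⊆ Set.range K) :
    ∃ l : ℝ, 0 < l ∧ ∀ g : H,
      (A / l ^ 2) * ‖ContinuousLinearMap.adjoint T g‖ ^ 2 ≤
        ∑' i, ‖⟪g, f i⟫‖ ^ 2 ∧
      ∑' i, ‖⟪g, f i⟫‖ ^ 2 ≤ B * ‖g‖ ^ 2 := by
  obtain ⟨C, hC⟩ := douglas_factor K T hrange
  set l : ℝ := ‖ContinuousLinearMap.adjoint C‖ + 1 with hl
  have hlpos : 0 < l := by positivity
  refine ⟨l, hlpos, fun g => ⟨?_, (hKframe g).2⟩⟩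
  have hadj : ContinuousLinearMap.adjoint T =
      (ContinuousLinearMap.adjoint C).comp (ContinuousLinearMap.adjoint K) := by
    rw [hC, ContinuousLinearMap.adjoint_comp]
  have hbound : ‖ContinuousLinearMap.adjoint T g‖ ≤ l * ‖ContinuousLinearMap.adjoint K g‖ := by
    rw [hadj]
    calc ‖(ContinuousLinearMap.adjoint C) ((ContinuousLinearMap.adjoint K) g)‖
        ≤ ‖ContinuousLinearMap.adjoint C‖ * ‖ContinuousLinearMap.adjoint K g‖ :=
          ContinuousLinearMap.le_opNorm _ _
      _ ≤ l * ‖ContinuousLinearMap.adjoint K g‖ := by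
          apply mul_le_mul_of_nonneg_right _ (norm_nonneg _)
          simp [hl]
  have hsq : ‖ContinuousLinearMap.adjoint T g‖ ^ 2 ≤
      l ^ 2 * ‖ContinuousLinearMap.adjoint K g‖ ^ 2 := by
    nlinarith [norm_nonneg (ContinuousLinearMap.adjoint T g),
      norm_nonneg (ContinuousLinearMap.adjoint K g)]
  have h1 := (hKframe g).1
  have : (A / l ^ 2) * ‖ContinuousLinearMap.adjoint T g‖ ^ 2 ≤
      A * ‖ContinuousLinearMap.adjoint K g‖ ^ 2 := by
    rw [div_mul_eq_mul_div, div_le_iff₀ (by positivity)]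
    nlinarith
  linarith
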